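/- T_TandG[M̂,F] ≤ T_rec[M̂]: for every time-and-graph TGNN T = (M_1,M_2,Cell,out) with M_1, M_2 ∈ M̂ having the same number of layers and Cell ∈ F, there exists a recursive TGNN T' = (M_3,out) with M_3 ∈ M̂ such that for every discrete pointed temporal graph (TG,v): T(TG,v) = 1 if and only if T'(TG,v) = 1. -/

import Mathlib

set_option maxHeartbeats 1000000

/-! ### Vectors -/

/-- Real vectors of dimension `d`. -/
abbrev Vec (d : ℕ) := Fin d → ℝ

/-- Cast a vector along an equality of dimensions. -/
def Vec.cast {m n : ℕ} (h : m = n) (x : Vec m) : Vec n := fun j => x (Fin.cast h.symm j)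

/-- Truncated ReLU. -/
noncomputable def trReLU (x : ℝ) : ℝ := max 0 (min 1 x)

/-- A single FNN layer: an affine map with rational weights followed by entrywise trReLU. -/
structure AffineLayer (m n : ℕ) where
  weight : Fin n → Fin m → ℚ
  bias : Fin n → ℚ

noncomputable def AffineLayer.eval {m n : ℕ} (l : AffineLayer m n) (x : Vec m) : Vec n :=
  fun j => trReLU ((∑ i, (l.weight j i : ℝ) * x i) + (l.bias j : ℝ))

/-- A feedforward neural network with trReLU activations,
of input dimension `m` and output dimension `n`. -/
structure FNN (m n : ℕ) where
  depth : ℕ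
  dims : ℕ → ℕ
  dim_in : dims 0 = m
  dim_out : dims depth = n
  layers : ∀ i : ℕ, AffineLayer (dims i) (dims (i + 1))

noncomputable def FNN.evalAux {m n : ℕ} (N : FNN m n) : (i : ℕ) → Vec (N.dims 0) → Vec (N.dims i)
  | 0, x => x
  | i + 1, x => (N.layers i).eval (N.evalAux i x)

noncomputable def FNN.eval {m n : ℕ} (N : FNN m n) (x : Vec m) : Vec n :=
  Vec.cast N.dim_out (N.evalAux N.depth (Vec.cast N.dim_in.symm x))

/-! ### Message-passing GNNs -/

/-- A general message-passing GNN: a finite sequence of layers, each consisting of an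
arbitrary multiset-aggregation function and an arbitrary combination function. -/
structure MPNN where
  depth : ℕ
  dims : ℕ → ℕ
  aggDims : ℕ → ℕ
  agg : ∀ i : ℕ, Multiset (Vec (dims i)) → Vec (aggDims i)
  comb : ∀ i : ℕ, Vec (dims i) → Vec (aggDims i) → Vec (dims (i + 1))

/-- Embeddings computed by an MPNN on a labelled graph (given by a symmetric boolean
adjacency function and a labelling `c`). -/
noncomputable def MPNN.emb (M : MPNN) {V : Type} [Fintype V] [DecidableEq V]
    (adj : V → V → Bool) (c : V → Vec (M.dims 0)) : (i : ℕ) → V → Vec (M.dims i)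
  | 0 => c
  | i + 1 => fun v =>
      M.comb i (M.emb adj c i v)
        (M.agg i ((Finset.univ.filter fun u => adj v u = true).val.map
          fun u => M.emb adj c i u))

/-- The final embedding `M(G,v)`. -/
noncomputable def MPNN.run (M : MPNN) {V : Type} [Fintype V] [DecidableEq V]
    (adj : V → V → Bool) (c : V → Vec (M.dims 0)) (v : V) : Vec (M.dims M.depth) :=
  M.emb adj c M.depth v

/-- Entrywise sum of a multiset of vectors. -/
noncomputable def sumAgg (d : ℕ) (S : Multiset (Vec d)) : Vec d :=
  fun j => (S.map fun x => x j).sum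

/-- The class `M̂`: MPNNs whose combination functions are realised by FNNs with trReLU
activations and whose aggregation is the entrywise sum of the multiset. -/
structure MPNNhat where
  depth : ℕ
  dims : ℕ → ℕ
  comb : ∀ i : ℕ, FNN (dims i + dims i) (dims (i + 1))

noncomputable def MPNNhat.toMPNN (M : MPNNhat) : MPNN where
  depth := M.depth
  dims := M.dims
  aggDims := M.dims
  agg := fun i => sumAgg (M.dims i)
  comb := fun i x y => (M.comb i).eval (Fin.append x y)

/-! ### Discrete temporal graphs -/

/-- A discrete temporal graph over vertex set `V` with `k` colours: a sequence of `len`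
snapshots (indexed `0, …, len - 1`, the timestamp of index `i` being `i + 1`), each with a
symmetric set of undirected edges and a `{0,1}`-colouring of the nodes. -/
structure TemporalGraph (V : Type) (k : ℕ) where
  len : ℕ
  len_pos : 0 < len
  adj : ℕ → V → V → Bool
  symm : ∀ i u w, adj i u w = adj i w u
  label : ℕ → V → Fin k → Bool

/-- The colour vector of node `v` at time index `i`, as a real vector. -/
noncomputable def TemporalGraph.colVec {V : Type} {k : ℕ} (TG : TemporalGraph V k)
    (i : ℕ) (v : V) : Vec k :=
  fun j => if TG.label i v j then 1 else 0

/-! ### The product logic PTL_{P,Y} × K -/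

/-- Formulas of the product logic `PTL_{P,Y} × K` over `k` colour propositions. -/
inductive PTLK (k : ℕ) : Type where
  | colour : Fin k → PTLK k
  | not : PTLK k → PTLK k
  | and : PTLK k → PTLK k → PTLK k
  | dia : PTLK k → PTLK k
  | yest : PTLK k → PTLK k
  | past : PTLK k → PTLK k

/-- Satisfaction of a formula at timestamped node `(v, i)` (time indices start at `0`). -/
def Sat {V : Type} {k : ℕ} (TG : TemporalGraph V k) : PTLK k → ℕ → V → Prop
  | .colour j, i, v => TG.label i v j = true
  | .not φ, i, v => ¬ Sat TG φ i v
  | .and φ ψ, i, v => Sat TG φ i v ∧ Sat TG ψ i v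
  | .dia φ, i, v => ∃ u : V, TG.adj i v u = true ∧ Sat TG φ i u
  | .yest φ, i, v => 0 < i ∧ Sat TG φ (i - 1) v
  | .past φ, i, v => ∃ j < i, Sat TG φ j v

/-- The list of subformulas of a formula (containing the formula itself). -/
def PTLK.subformulas {k : ℕ} : PTLK k → List (PTLK k)
  | .colour j => [.colour j]
  | .not φ => .not φ :: φ.subformulas
  | .and φ ψ => .and φ ψ :: (φ.subformulas ++ ψ.subformulas)
  | .dia φ => .dia φ :: φ.subformulas
  | .yest φ => .yest φ :: φ.subformulas
  | .past φ => .past φ :: φ.subformulas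

/-- A formula is temporal if its outermost operator is `Y` or `P`. -/
def PTLK.isTemporal {k : ℕ} : PTLK k → Prop
  | .yest _ => True
  | .past _ => True
  | _ => False

/-- A formula is atomic if it is a colour proposition. -/
def PTLK.isAtomic {k : ℕ} : PTLK k → Prop
  | .colour _ => True
  | _ => False

/-! ### Recursive TGNNs over M̂ -/

/-- A recursive TGNN `T = (M, out)` with `M ∈ M̂`: the input dimension of `M` is
`k + d` where `d` is the output dimension of `M`, and `out` is a single-layer FNN with
trReLU activation. -/
structure RecTGNN (k : ℕ) where
  M : MPNNhat
  dim_in : M.dims 0 = k + M.dims M.depth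
  out : AffineLayer (M.dims M.depth) 1

/-- The state `h_v^{(depth)}(t_i)` computed by a recursive TGNN. -/
noncomputable def RecTGNN.state {k : ℕ} (T : RecTGNN k) {V : Type} [Fintype V] [DecidableEq V]
    (TG : TemporalGraph V k) : ℕ → V → Vec (T.M.dims T.M.depth)
  | 0 => fun v => T.M.toMPNN.run (TG.adj 0)
      (fun u => Vec.cast T.dim_in.symm (Fin.append (TG.colVec 0 u) (fun _ => 0))) v
  | i + 1 => fun v => T.M.toMPNN.run (TG.adj (i + 1))
      (fun u => Vec.cast T.dim_in.symm (Fin.append (TG.colVec (i + 1) u) (T.state TG i u))) v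

/-- The input labelling `h_v^{(0)}(t_i)` fed to `M` at time index `i`. -/
noncomputable def RecTGNN.input {k : ℕ} (T : RecTGNN k) {V : Type} [Fintype V] [DecidableEq V]
    (TG : TemporalGraph V k) : ℕ → V → Vec (T.M.dims 0)
  | 0 => fun u => Vec.cast T.dim_in.symm (Fin.append (TG.colVec 0 u) (fun _ => 0))
  | i + 1 => fun u => Vec.cast T.dim_in.symm (Fin.append (TG.colVec (i + 1) u) (T.state TG i u))

/-- The output `T(TG, v)` of a recursive TGNN at the last time index. -/
noncomputable def RecTGNN.output {k : ℕ} (T : RecTGNN k) {V : Type} [Fintype V] [DecidableEq V]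
    (TG : TemporalGraph V k) (v : V) : ℝ :=
  T.out.eval (T.state TG (TG.len - 1) v) 0

/-- `T` captures `φ`: on every discrete pointed temporal graph, `T` outputs `1`
iff `φ` is satisfied at the distinguished node at the last timestamp. -/
def RecTGNN.captures {k : ℕ} (T : RecTGNN k) (φ : PTLK k) : Prop :=
  ∀ (V : Type) [Fintype V] [DecidableEq V], ∀ (TG : TemporalGraph V k) (v : V),
    Sat TG φ (TG.len - 1) v ↔ T.output TG v = 1

/-! ### Time-and-graph TGNNs -/

/-- A time-and-graph TGNN `T = (M₁, M₂, Cell, out)` with arbitrary MPNNs `M₁, M₂` (of the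
same number of layers), arbitrary cell function and arbitrary output function. -/
structure TandGTGNN (k : ℕ) where
  M₁ : MPNN
  M₂ : MPNN
  sameDepth : M₁.depth = M₂.depth
  hdim : ℕ
  dim1 : M₁.dims 0 = k
  dim2 : M₂.dims 0 = hdim
  cell : Vec (M₁.dims M₁.depth) → Vec (M₂.dims M₂.depth) → Vec hdim
  out : Vec hdim → ℝ

noncomputable def TandGTGNN.state {k : ℕ} (T : TandGTGNN k) {V : Type} [Fintype V]
    [DecidableEq V] (TG : TemporalGraph V k) : ℕ → V → Vec T.hdim
  | 0 => fun v => T.cell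
      (T.M₁.run (TG.adj 0) (fun u => Vec.cast T.dim1.symm (TG.colVec 0 u)) v)
      (T.M₂.run (TG.adj 0) (fun _ => Vec.cast T.dim2.symm (fun _ => 0)) v)
  | i + 1 => fun v => T.cell
      (T.M₁.run (TG.adj (i + 1)) (fun u => Vec.cast T.dim1.symm (TG.colVec (i + 1) u)) v)
      (T.M₂.run (TG.adj (i + 1)) (fun u => Vec.cast T.dim2.symm (T.state TG i u)) v)

noncomputable def TandGTGNN.output {k : ℕ} (T : TandGTGNN k) {V : Type} [Fintype V]
    [DecidableEq V] (TG : TemporalGraph V k) (v : V) : ℝ :=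
  T.out (T.state TG (TG.len - 1) v)

def TandGTGNN.captures {k : ℕ} (T : TandGTGNN k) (φ : PTLK k) : Prop :=
  ∀ (V : Type) [Fintype V] [DecidableEq V], ∀ (TG : TemporalGraph V k) (v : V),
    Sat TG φ (TG.len - 1) v ↔ T.output TG v = 1

/-- Membership of a time-and-graph TGNN in the class `T_TandG[M̂, F]`: both MPNNs lie in
`M̂`, the cell is a single-layer FNN with trReLU activations, and so is the output. -/
def TandGTGNN.inHatF {k : ℕ} (T : TandGTGNN k) : Prop :=
  (∃ N₁ : MPNNhat, T.M₁ = N₁.toMPNN) ∧ (∃ N₂ : MPNNhat, T.M₂ = N₂.toMPNN) ∧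
  (∃ C : AffineLayer (T.M₁.dims T.M₁.depth + T.M₂.dims T.M₂.depth) T.hdim,
     ∀ x y, T.cell x y = C.eval (Fin.append x y)) ∧
  (∃ O : AffineLayer T.hdim 1, ∀ x, T.out x = O.eval x 0)

/-! ### Global TGNNs -/

/-- An operation combining an embedding vector with a time-feature vector of dimension `m`. -/
structure GlobOp (m : ℕ) where
  cdim : ℕ → ℕ
  op : ∀ d : ℕ, Vec d → Vec m → Vec (cdim d)

/-- A global TGNN `T = (M, φ', out)` with arbitrary MPNN components, arbitrary time
function, arbitrary combining operation and arbitrary output function. -/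
structure GlobTGNN (k : ℕ) where
  tdim : ℕ
  circ : GlobOp tdim
  timeFn : ℝ → Vec tdim
  depth : ℕ
  dims : ℕ → ℕ
  dim_in : dims 0 = k
  aggDims : ℕ → ℕ
  agg : ∀ i : ℕ, Multiset (Vec (circ.cdim (dims i))) → Vec (aggDims i)
  comb : ∀ i : ℕ, Vec (dims i) → Vec (aggDims i) → Vec (dims (i + 1))
  out : Vec (dims depth) → ℝ

/-- The embeddings `h_v^{(i)}(t_j)` computed by a global TGNN. -/
noncomputable def GlobTGNN.emb {k : ℕ} (T : GlobTGNN k) {V : Type} [Fintype V] [DecidableEq V]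
    (TG : TemporalGraph V k) : (i : ℕ) → ℕ → V → Vec (T.dims i)
  | 0 => fun j v => Vec.cast T.dim_in.symm (TG.colVec j v)
  | i + 1 => fun j v =>
      T.comb i (T.emb TG i j v)
        (T.agg i ((Finset.range (j + 1)).val.bind fun h =>
          (Finset.univ.filter fun u => TG.adj h v u = true).val.map
            fun u => T.circ.op _ (T.emb TG i h u) (T.timeFn ((j : ℝ) - (h : ℝ)))))

noncomputable def GlobTGNN.output {k : ℕ} (T : GlobTGNN k) {V : Type} [Fintype V]
    [DecidableEq V] (TG : TemporalGraph V k) (v : V) : ℝ :=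
  T.out (T.emb TG T.depth (TG.len - 1) v)

def GlobTGNN.captures {k : ℕ} (T : GlobTGNN k) (φ : PTLK k) : Prop :=
  ∀ (V : Type) [Fintype V] [DecidableEq V], ∀ (TG : TemporalGraph V k) (v : V),
    Sat TG φ (TG.len - 1) v ↔ T.output TG v = 1

/-- Vector concatenation as the combining operation `∥`. -/
def concatOp (m : ℕ) : GlobOp m where
  cdim := fun d => d + m
  op := fun _ x y => Fin.append x y

/-- A time2vec function. -/
structure Time2Vec (m : ℕ) where
  w : Fin m → ℚ
  b : Fin m → ℚ
  σ : ℝ → ℝ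
  period : ℝ
  period_pos : 0 < period
  periodic : Function.Periodic σ period

noncomputable def Time2Vec.eval {m : ℕ} (f : Time2Vec m) (t : ℝ) : Vec m :=
  fun j => if (j : ℕ) = 0 then (f.w j : ℝ) * t + (f.b j : ℝ)
           else f.σ ((f.w j : ℝ) * t + (f.b j : ℝ))

/-- The class `T_glob[M̂_msg, Q_time2vec, ∥]`: global TGNNs whose MPNN lies in `M̂_msg`
(combination functions given by trReLU FNNs and aggregation `agg S = Σ_{x∈S} msg(x)` with
`msg` a trReLU FNN), whose time function is a time2vec function, and whose combining
operation is vector concatenation; the output is a single-layer trReLU FNN. -/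
structure GlobTGNNmsg (k : ℕ) where
  tdim : ℕ
  timeFn : Time2Vec tdim
  depth : ℕ
  dims : ℕ → ℕ
  dim_in : dims 0 = k
  aggDims : ℕ → ℕ
  msg : ∀ i : ℕ, FNN (dims i + tdim) (aggDims i)
  comb : ∀ i : ℕ, FNN (dims i + aggDims i) (dims (i + 1))
  out : AffineLayer (dims depth) 1

noncomputable def GlobTGNNmsg.toGlob {k : ℕ} (T : GlobTGNNmsg k) : GlobTGNN k where
  tdim := T.tdim
  circ := concatOp T.tdim
  timeFn := T.timeFn.eval
  depth := T.depth
  dims := T.dims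
  dim_in := T.dim_in
  aggDims := T.aggDims
  agg := fun i S => sumAgg (T.aggDims i) (S.map (T.msg i).eval)
  comb := fun i x y => (T.comb i).eval (Fin.append x y)
  out := fun x => (T.out).eval x 0

noncomputable def GlobTGNNmsg.output {k : ℕ} (T : GlobTGNNmsg k) {V : Type} [Fintype V]
    [DecidableEq V] (TG : TemporalGraph V k) (v : V) : ℝ :=
  T.toGlob.output TG v

def GlobTGNNmsg.captures {k : ℕ} (T : GlobTGNNmsg k) (φ : PTLK k) : Prop :=
  ∀ (V : Type) [Fintype V] [DecidableEq V], ∀ (TG : TemporalGraph V k) (v : V),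
    Sat TG φ (TG.len - 1) v ↔ T.output TG v = 1

/-! ### Auxiliary machinery for the simulation -/

section AuxBasics

lemma trReLU_nonneg (x : ℝ) : 0 ≤ trReLU x := le_max_left _ _

lemma trReLU_le_one (x : ℝ) : trReLU x ≤ 1 := max_le (by norm_num) (min_le_left _ _)

lemma trReLU_mem (x : ℝ) : trReLU x ∈ Set.Icc (0:ℝ) 1 := ⟨trReLU_nonneg x, trReLU_le_one x⟩

lemma trReLU_of_mem {x : ℝ} (h : x ∈ Set.Icc (0:ℝ) 1) : trReLU x = x := by
  unfold trReLU; rw [min_eq_right h.2, max_eq_right h.1]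

lemma vec_cast_self {m : ℕ} (h : m = m) (x : Vec m) : Vec.cast h x = x := rfl

lemma vec_cast_cast {m n p : ℕ} (h : m = n) (h' : n = p) (x : Vec m) :
    Vec.cast h' (Vec.cast h x) = Vec.cast (h.trans h') x := by subst h; subst h'; rfl

lemma vec_cast_apply {m n : ℕ} (h : m = n) (x : Vec m) (j : Fin n) :
    Vec.cast h x j = x (Fin.cast h.symm j) := rfl

lemma append_apply {m n : ℕ} {α : Sort*} (u : Fin m → α) (w : Fin n → α) (i : Fin (m + n)) :
    Fin.append u w i = if h : (i : ℕ) < m then u ⟨i, h⟩ else w ⟨(i : ℕ) - m, by omega⟩ := by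
  rcases lt_or_ge (i : ℕ) m with h | h
  · rw [dif_pos h]
    have hi : i = Fin.castAdd n ⟨(i:ℕ), h⟩ := by ext; rfl
    conv_lhs => rw [hi]
    exact Fin.append_left u w _
  · rw [dif_neg (by omega)]
    have hi : i = Fin.natAdd m ⟨(i:ℕ) - m, by omega⟩ := by ext; simp; omega
    conv_lhs => rw [hi]
    exact Fin.append_right u w _

lemma addCases_apply {m n : ℕ} {α : Sort*} (f : Fin m → α) (g : Fin n → α) (i : Fin (m + n)) :
    Fin.addCases (motive := fun _ => α) f g i =
      if h : (i : ℕ) < m then f ⟨i, h⟩ else g ⟨(i : ℕ) - m, by omega⟩ := by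
  rcases lt_or_ge (i : ℕ) m with h | h
  · rw [dif_pos h]
    have hi : i = Fin.castAdd n ⟨(i:ℕ), h⟩ := by ext; rfl
    conv_lhs => rw [hi]
    exact Fin.addCases_left _
  · rw [dif_neg (by omega)]
    have hi : i = Fin.natAdd m ⟨(i:ℕ) - m, by omega⟩ := by ext; simp; omega
    conv_lhs => rw [hi]
    exact Fin.addCases_right _

lemma vec_cast_append_left {m m' c : ℕ} (h : m = m') (h2 : m + c = m' + c)
    (u : Vec m) (w : Vec c) :
    Vec.cast h2 (Fin.append u w) = Fin.append (Vec.cast h u) w := by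
  subst h; rw [vec_cast_self, vec_cast_self]

lemma sumAgg_apply (d : ℕ) (S : Multiset (Vec d)) (j : Fin d) :
    sumAgg d S j = (S.map fun x => x j).sum := rfl

lemma sumAgg_cast {m n : ℕ} (h : m = n) {α : Type} (S : Multiset α) (f : α → Vec m) :
    sumAgg n (S.map fun u => Vec.cast h (f u)) = Vec.cast h (sumAgg m (S.map f)) := by
  subst h; rfl

end AuxBasics

section AuxLayers

/-- Precompose an affine layer with a coordinate selection. -/
def ALprecomp {m n M : ℕ} (l : AffineLayer m n) (ρ : Fin m → Fin M) : AffineLayer M n :=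
  ⟨fun j i' => ∑ i, if ρ i = i' then l.weight j i else 0, l.bias⟩

lemma ALprecomp_eval {m n M : ℕ} (l : AffineLayer m n) (ρ : Fin m → Fin M) (x : Vec M) :
    (ALprecomp l ρ).eval x = l.eval (fun i => x (ρ i)) := by
  funext j
  unfold AffineLayer.eval ALprecomp
  congr 1
  congr 1
  push_cast
  simp only [apply_ite (fun (q:ℚ) => (q:ℝ)), Rat.cast_zero]
  simp only [Finset.sum_mul, ite_mul, zero_mul]
  rw [Finset.sum_comm]
  refine Finset.sum_congr rfl fun i _ => ?_
  simp [Finset.sum_ite_eq]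

/-- Vertical concatenation (same input) of affine layers. -/
def ALvcat {M n n' : ℕ} (l : AffineLayer M n) (l' : AffineLayer M n') : AffineLayer M (n + n') :=
  ⟨Fin.addCases (motive := fun _ => Fin M → ℚ) l.weight l'.weight, Fin.append l.bias l'.bias⟩

lemma ALvcat_eval {M n n' : ℕ} (l : AffineLayer M n) (l' : AffineLayer M n') (x : Vec M) :
    (ALvcat l l').eval x = Fin.append (l.eval x) (l'.eval x) := by
  funext j
  rw [append_apply]
  simp only [AffineLayer.eval, ALvcat, addCases_apply, append_apply]
  split <;> rfl

/-- The identity affine layer. -/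
def idA (c : ℕ) : AffineLayer c c := ⟨fun j i => if j = i then 1 else 0, fun _ => 0⟩

lemma idA_eval (c : ℕ) (x : Vec c) (j : Fin c) : (idA c).eval x j = trReLU (x j) := by
  unfold AffineLayer.eval idA
  congr 1
  push_cast
  simp only [apply_ite (fun (q:ℚ) => (q:ℝ)), Rat.cast_one, Rat.cast_zero, ite_mul, one_mul,
    zero_mul, Finset.sum_ite_eq, Finset.mem_univ, if_true, add_zero]


lemma AL_eval_mem {m n : ℕ} (l : AffineLayer m n) (x : Vec m) (j : Fin n) :
    l.eval x j ∈ Set.Icc (0:ℝ) 1 := trReLU_mem _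

end AuxLayers

section AuxFNN

/-- Cast an FNN along dimension equalities. -/
def FNNcast {m n m' n' : ℕ} (hm : m = m') (hn : n = n') (F : FNN m n) : FNN m' n' :=
  ⟨F.depth, F.dims, F.dim_in.trans hm, F.dim_out.trans hn, F.layers⟩

lemma FNNcast_eval {m n m' n' : ℕ} (hm : m = m') (hn : n = n') (F : FNN m n) (x : Vec m') :
    (FNNcast hm hn F).eval x = Vec.cast hn (F.eval (Vec.cast hm.symm x)) := by
  subst hm; subst hn; rfl

lemma FNN_heq_eval {m n m' n' : ℕ} (hm : m = m') (hn : n = n') {F : FNN m n} {G : FNN m' n'}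
    (h : HEq F G) (x : Vec m') :
    G.eval x = Vec.cast hn (F.eval (Vec.cast hm.symm x)) := by
  subst hm; subst hn; rw [heq_iff_eq] at h; subst h; rfl

lemma FNNcast_heq {m n m' n' : ℕ} (hm : m = m') (hn : n = n') (F : FNN m n) :
    HEq (FNNcast hm hn F) F := by subst hm; subst hn; rfl

/-- The depth-0 (identity) FNN. -/
def Zfnn (m : ℕ) : FNN m m := ⟨0, fun _ => m, rfl, rfl, fun _ => idA m⟩

lemma Zfnn_eval (m : ℕ) (x : Vec m) : (Zfnn m).eval x = x := rfl

/-- A junk FNN of arbitrary dimensions. -/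
def junkF (m n : ℕ) : FNN m n :=
  ⟨1, fun i => Nat.rec m (fun _ _ => n) i, rfl, rfl,
    fun i => match i with
      | 0 => ⟨fun _ _ => 0, fun _ => 0⟩
      | _ + 1 => ⟨fun _ _ => 0, fun _ => 0⟩⟩

/-- A single affine layer as an FNN of depth 1. -/
def affineToFNN {m n : ℕ} (l : AffineLayer m n) : FNN m n :=
  ⟨1, fun i => Nat.rec m (fun _ _ => n) i, rfl, rfl,
    fun i => match i with
      | 0 => l
      | _ + 1 => idA n⟩

lemma affineToFNN_eval {m n : ℕ} (l : AffineLayer m n) (x : Vec m) :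
    (affineToFNN l).eval x = l.eval x := rfl

lemma FNN_eval_depth_zero {m n : ℕ} (F : FNN m n) (h : F.depth = 0) (e : m = n) (x : Vec m) :
    F.eval x = Vec.cast e x := by
  obtain ⟨d, dims, di, dout, layers⟩ := F
  dsimp at h
  subst h
  show Vec.cast dout (Vec.cast di.symm x) = Vec.cast e x
  rw [vec_cast_cast]

lemma FNN_dims_zero {m n : ℕ} (F : FNN m n) (h : F.depth = 0) : m = n := by
  have h1 := F.dim_in
  have h2 := F.dim_out
  rw [h] at h2
  omega

lemma FNN_eval_mem {m n : ℕ} (F : FNN m n) (h : F.depth ≠ 0) (x : Vec m) (j : Fin n) :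
    F.eval x j ∈ Set.Icc (0:ℝ) 1 := by
  obtain ⟨d, dims, di, dout, layers⟩ := F
  dsimp at h
  obtain ⟨p, rfl⟩ := Nat.exists_eq_succ_of_ne_zero h
  exact trReLU_mem _

/-- The key deep-layer combinator: apply `F` to selected coordinates of the input while
carrying selected (bounded) coordinates along. -/
def deepComb {m n : ℕ} (F : FNN m n) (h : F.depth ≠ 0) (c M : ℕ)
    (ρ : Fin m → Fin M) (γ : Fin c → Fin M) : FNN M (n + c) where
  depth := F.depth
  dims := fun i => Nat.rec M (fun i _ => F.dims (i + 1) + c) i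
  dim_in := rfl
  dim_out := by
    obtain ⟨p, hp⟩ := Nat.exists_eq_succ_of_ne_zero h
    rw [hp]
    show F.dims (p + 1) + c = n + c
    rw [show p + 1 = F.depth from hp.symm, F.dim_out]
  layers := fun i => match i with
    | 0 => ALvcat (ALprecomp (F.layers 0) fun i => ρ (Fin.cast F.dim_in i)) (ALprecomp (idA c) γ)
    | i + 1 => ALvcat (ALprecomp (F.layers (i + 1)) (Fin.castAdd c))
        (ALprecomp (idA c) (Fin.natAdd (F.dims (i + 1))))

lemma deepComb_evalAux {m n : ℕ} (F : FNN m n) (h : F.depth ≠ 0) (c M : ℕ)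
    (ρ : Fin m → Fin M) (γ : Fin c → Fin M) (x : Vec M)
    (hb : ∀ p, x (γ p) ∈ Set.Icc (0:ℝ) 1) :
    ∀ i, (deepComb F h c M ρ γ).evalAux (i + 1) x =
      Fin.append (F.evalAux (i + 1) (Vec.cast F.dim_in.symm fun q => x (ρ q)))
        (fun p => x (γ p)) := by
  intro i
  induction i with
  | zero =>
      show (ALvcat _ _).eval x = _
      rw [ALvcat_eval, ALprecomp_eval, ALprecomp_eval]
      have h2 : ((idA c).eval fun i => x (γ i)) = fun p => x (γ p) := by
        funext p; rw [idA_eval]; exact trReLU_of_mem (hb p)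
      rw [h2]
      rfl
  | succ i ih =>
      show (ALvcat _ _).eval ((deepComb F h c M ρ γ).evalAux (i + 1) x) = _
      erw [ih, ALvcat_eval, ALprecomp_eval, ALprecomp_eval]
      have h1 : (fun q => Fin.append
          (F.evalAux (i + 1) (Vec.cast F.dim_in.symm fun q => x (ρ q)))
          (fun p => x (γ p)) (Fin.castAdd c q)) =
          F.evalAux (i + 1) (Vec.cast F.dim_in.symm fun q => x (ρ q)) := by
        funext q; exact Fin.append_left _ _ q
      have h2 : ((idA c).eval fun q => Fin.append
          (F.evalAux (i + 1) (Vec.cast F.dim_in.symm fun q => x (ρ q)))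
          (fun p => x (γ p)) (Fin.natAdd (F.dims (i + 1)) q)) = fun p => x (γ p) := by
        funext p; rw [idA_eval, Fin.append_right]; exact trReLU_of_mem (hb p)
      rw [h1, h2]
      rfl

lemma deepComb_eval {m n : ℕ} (F : FNN m n) (h : F.depth ≠ 0) (c M : ℕ)
    (ρ : Fin m → Fin M) (γ : Fin c → Fin M) (x : Vec M)
    (hb : ∀ p, x (γ p) ∈ Set.Icc (0:ℝ) 1) :
    (deepComb F h c M ρ γ).eval x =
      Fin.append (F.eval fun q => x (ρ q)) (fun p => x (γ p)) := by
  have hAux := deepComb_evalAux F h c M ρ γ x hb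
  obtain ⟨d, dims, di, dout, layers⟩ := F
  dsimp at h
  obtain ⟨p, rfl⟩ := Nat.exists_eq_succ_of_ne_zero h
  show Vec.cast _ ((deepComb _ _ c M ρ γ).evalAux (p + 1) (Vec.cast _ x)) = _
  erw [show (Vec.cast (rfl : M = M) x) = x from rfl, hAux p]
  erw [vec_cast_append_left dout]
  rfl

end AuxFNN

section RunSeqSec

lemma vec_cast_append {m m' n n' : ℕ} (h : m = m') (h' : n = n') (h2 : m + n = m' + n')
    (u : Vec m) (w : Vec n) :
    Vec.cast h2 (Fin.append u w) = Fin.append (Vec.cast h u) (Vec.cast h' w) := by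
  subst h; subst h'; rfl

variable {V : Type} [Fintype V] [DecidableEq V]

/-- Abstract run of a sequence of (sum-aggregation) message-passing layers over a graph. -/
noncomputable def runSeq (SD' : ℕ → ℕ) (SC : ∀ j, FNN (SD' j + SD' j) (SD' (j + 1)))
    (adj : V → V → Bool) (E₀ : V → Vec (SD' 0)) : (j : ℕ) → V → Vec (SD' j)
  | 0 => E₀
  | j + 1 => fun v => (SC j).eval (Fin.append (runSeq SD' SC adj E₀ j v)
      (sumAgg (SD' j) ((Finset.univ.filter fun u => adj v u = true).val.map
        (runSeq SD' SC adj E₀ j))))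

/-- Gluing lemma: a stretch of layers of an `MPNNhat` matching an abstract layer sequence
computes the abstract run. -/
lemma glue (H : MPNNhat) (adj : V → V → Bool) (lab : V → Vec (H.dims 0))
    (SD' : ℕ → ℕ) (SC : ∀ j, FNN (SD' j + SD' j) (SD' (j + 1))) (start s : ℕ)
    (hd : ∀ j, j ≤ s → H.dims (start + j) = SD' j)
    (hc : ∀ j, j < s → HEq (H.comb (start + j)) (SC j))
    (E₀ : V → Vec (SD' 0))
    (h0 : ∀ v, H.toMPNN.emb adj lab start v = Vec.cast (hd 0 (Nat.zero_le s)).symm (E₀ v)) :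
    ∀ j (hj : j ≤ s) (v : V), H.toMPNN.emb adj lab (start + j) v =
      Vec.cast (hd j hj).symm (runSeq SD' SC adj E₀ j v) := by
  intro j
  induction j with
  | zero => intro hj v; exact h0 v
  | succ j ih =>
      intro hj v
      have hj' : j ≤ s := by omega
      have e1 := hd j hj'
      have e2 := hd (j + 1) hj
      have hE : H.toMPNN.emb adj lab (start + j) =
          fun u => Vec.cast e1.symm (runSeq SD' SC adj E₀ j u) := funext (ih hj')
      show (H.comb (start + j)).eval (Fin.append (H.toMPNN.emb adj lab (start + j) v)
        (sumAgg _ ((Finset.univ.filter fun u => adj v u = true).val.map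
          (H.toMPNN.emb adj lab (start + j))))) = _
      rw [FNN_heq_eval (show SD' j + SD' j = H.dims (start + j) + H.dims (start + j) by
          rw [e1]) e2.symm (hc j (by omega)).symm]
      rw [hE, sumAgg_cast, ← vec_cast_append e1.symm e1.symm (by rw [e1]), vec_cast_cast]
      rfl

end RunSeqSec

section SegSec

/-- A "phase" specification: simulate line `N` starting at its layer `off`, carrying a
bounded context of dimension `c`, starting from composite layout `D₀` where the line
embedding sits at `σ₀` and the context at `χ₀`. -/
structure Seg where
  N : MPNNhat
  off : ℕ
  c : ℕ
  D₀ : ℕ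
  σ₀ : Fin (N.dims off) → Fin D₀
  χ₀ : Fin c → Fin D₀

namespace Seg

def SD (P : Seg) : ℕ → ℕ
  | 0 => P.D₀
  | j + 1 => if (P.N.comb (P.off + j)).depth = 0 then P.SD j + P.SD j
      else P.N.dims (P.off + j + 1) + P.c

def sigma (P : Seg) : (j : ℕ) → Fin (P.N.dims (P.off + j)) → Fin (P.SD j)
  | 0 => P.σ₀
  | j + 1 => fun q =>
      if h : (P.N.comb (P.off + j)).depth = 0 then
        Fin.cast (show P.SD j + P.SD j = P.SD (j + 1) by simp [Seg.SD, h])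
          (Fin.addCases (motive := fun _ => Fin (P.SD j + P.SD j))
            (fun r => Fin.castAdd _ (P.sigma j r))
            (fun r => Fin.natAdd _ (P.sigma j r))
            (Fin.cast (FNN_dims_zero (P.N.comb (P.off + j)) h).symm q))
      else
        Fin.cast (show P.N.dims (P.off + j + 1) + P.c = P.SD (j + 1) by simp [Seg.SD, h])
          (Fin.castAdd P.c q)

def chi (P : Seg) : (j : ℕ) → Fin P.c → Fin (P.SD j)
  | 0 => P.χ₀
  | j + 1 => fun p =>
      if h : (P.N.comb (P.off + j)).depth = 0 then
        Fin.cast (show P.SD j + P.SD j = P.SD (j + 1) by simp [Seg.SD, h])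
          (Fin.castAdd _ (P.chi j p))
      else
        Fin.cast (show P.N.dims (P.off + j + 1) + P.c = P.SD (j + 1) by simp [Seg.SD, h])
          (Fin.natAdd _ p)

noncomputable def scomb (P : Seg) (j : ℕ) : FNN (P.SD j + P.SD j) (P.SD (j + 1)) :=
  if h : (P.N.comb (P.off + j)).depth = 0 then
    FNNcast rfl (show P.SD j + P.SD j = P.SD (j + 1) by simp [Seg.SD, h])
      (Zfnn (P.SD j + P.SD j))
  else
    FNNcast rfl (show P.N.dims (P.off + j + 1) + P.c = P.SD (j + 1) by simp [Seg.SD, h])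
      (deepComb (P.N.comb (P.off + j)) h P.c (P.SD j + P.SD j)
        (Fin.addCases (motive := fun _ => Fin (P.SD j + P.SD j))
          (fun r => Fin.castAdd _ (P.sigma j r))
          (fun r => Fin.natAdd _ (P.sigma j r)))
        (fun p => Fin.castAdd _ (P.chi j p)))

end Seg

lemma hatEmb_succ (N : MPNNhat) {V : Type} [Fintype V] [DecidableEq V]
    (adj : V → V → Bool) (lab : V → Vec (N.dims 0)) (i : ℕ) (v : V) :
    N.toMPNN.emb adj lab (i + 1) v = (N.comb i).eval
      (Fin.append (N.toMPNN.emb adj lab i v)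
        (sumAgg (N.dims i) ((Finset.univ.filter fun u => adj v u = true).val.map
          (N.toMPNN.emb adj lab i)))) := rfl

lemma runSeq_succ {V : Type} [Fintype V] [DecidableEq V]
    (SD' : ℕ → ℕ) (SC : ∀ j, FNN (SD' j + SD' j) (SD' (j + 1)))
    (adj : V → V → Bool) (E₀ : V → Vec (SD' 0)) (j : ℕ) (v : V) :
    runSeq SD' SC adj E₀ (j + 1) v = (SC j).eval
      (Fin.append (runSeq SD' SC adj E₀ j v)
        (sumAgg (SD' j) ((Finset.univ.filter fun u => adj v u = true).val.map
          (runSeq SD' SC adj E₀ j)))) := rfl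

end SegSec

section GenSimSec

variable {V : Type} [Fintype V] [DecidableEq V]

lemma Seg.genSim (P : Seg) (adj : V → V → Bool) (labN : V → Vec (P.N.dims 0))
    (ctx : V → Vec P.c) (E₀ : V → Vec P.D₀)
    (hinit1 : ∀ v q, E₀ v (P.σ₀ q) = P.N.toMPNN.emb adj labN P.off v q)
    (hinit2 : ∀ v p, E₀ v (P.χ₀ p) = ctx v p)
    (s : ℕ)
    (hb : (∃ j, j < s ∧ (P.N.comb (P.off + j)).depth ≠ 0) →
      ∀ v p, ctx v p ∈ Set.Icc (0:ℝ) 1) :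
    ∀ j, j ≤ s → ∀ v,
      (∀ q, runSeq P.SD P.scomb adj E₀ j v (P.sigma j q) =
        P.N.toMPNN.emb adj labN (P.off + j) v q) ∧
      (∀ p, runSeq P.SD P.scomb adj E₀ j v (P.chi j p) = ctx v p) := by
  intro j
  induction j with
  | zero => exact fun _ v => ⟨hinit1 v, hinit2 v⟩
  | succ j ih =>
    intro hj v
    have IH := ih (by omega)
    set A := runSeq P.SD P.scomb adj E₀ j v with hA
    set B := sumAgg (P.SD j) ((Finset.univ.filter fun u => adj v u = true).val.map
      (runSeq P.SD P.scomb adj E₀ j)) with hB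
    have hrun : runSeq P.SD P.scomb adj E₀ (j + 1) v = (P.scomb j).eval (Fin.append A B) := rfl
    have hBσ : ∀ r : Fin (P.N.dims (P.off + j)), B (P.sigma j r) =
        sumAgg (P.N.dims (P.off + j)) ((Finset.univ.filter fun u => adj v u = true).val.map
          (P.N.toMPNN.emb adj labN (P.off + j))) r := by
      intro r
      erw [hB, sumAgg_apply, sumAgg_apply, Multiset.map_map, Multiset.map_map]
      exact congrArg Multiset.sum (Multiset.map_congr rfl fun u _ => (IH u).1 r)
    by_cases h : (P.N.comb (P.off + j)).depth = 0
    · -- zero (identity) layer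
      have e : P.SD j + P.SD j = P.SD (j + 1) := by simp [Seg.SD, h]
      have zd : P.N.dims (P.off + j) + P.N.dims (P.off + j) = P.N.dims (P.off + j + 1) :=
        FNN_dims_zero _ h
      have hsc : P.scomb j = FNNcast rfl e (Zfnn (P.SD j + P.SD j)) := by
        simp only [Seg.scomb]; rw [dif_pos h]
      have hx : ∀ i : Fin (P.SD j + P.SD j),
          runSeq P.SD P.scomb adj E₀ (j + 1) v (Fin.cast e i) = Fin.append A B i := by
        intro i
        rw [hrun, hsc, FNNcast_eval, vec_cast_self, Zfnn_eval]
        rfl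
      have hemb0 : P.N.toMPNN.emb adj labN (P.off + (j + 1)) v = (P.N.comb (P.off + j)).eval
          (Fin.append (P.N.toMPNN.emb adj labN (P.off + j) v)
            (sumAgg (P.N.dims (P.off + j))
              ((Finset.univ.filter fun u => adj v u = true).val.map
                (P.N.toMPNN.emb adj labN (P.off + j))))) :=
        hatEmb_succ P.N adj labN (P.off + j) v
      have hemb : ∀ q, P.N.toMPNN.emb adj labN (P.off + (j + 1)) v q =
          Fin.append (P.N.toMPNN.emb adj labN (P.off + j) v)
            (sumAgg (P.N.dims (P.off + j))
              ((Finset.univ.filter fun u => adj v u = true).val.map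
                (P.N.toMPNN.emb adj labN (P.off + j)))) (Fin.cast zd.symm q : Fin (P.N.dims (P.off + j) + P.N.dims (P.off + j))) := by
        intro q
        rw [hemb0, FNN_eval_depth_zero _ h zd]
        rfl
      constructor
      · intro q
        have hq : P.sigma (j + 1) q = Fin.cast e
            (Fin.addCases (motive := fun _ => Fin (P.SD j + P.SD j))
              (fun r => Fin.castAdd _ (P.sigma j r))
              (fun r => Fin.natAdd _ (P.sigma j r))
              (Fin.cast zd.symm q)) := by
          simp only [Seg.sigma]; rw [dif_pos h]
        erw [hq, hx, hemb]
        generalize (Fin.cast zd.symm q) = q'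
        by_cases hlt : (q' : ℕ) < P.N.dims (P.off + j)
        · erw [addCases_apply, dif_pos hlt, Fin.append_left, append_apply,
            dif_pos (show (q' : ℕ) < P.N.toMPNN.dims (P.off + j) from hlt)]
          exact (IH v).1 _
        · erw [addCases_apply, dif_neg hlt, Fin.append_right, append_apply,
            dif_neg (show ¬ (q' : ℕ) < P.N.toMPNN.dims (P.off + j) from hlt)]
          exact hBσ _
      · intro p
        have hp : P.chi (j + 1) p = Fin.cast e (Fin.castAdd (P.SD j) (P.chi j p)) := by
          simp only [Seg.chi]; rw [dif_pos h]
        rw [hp, hx, Fin.append_left]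
        exact (IH v).2 p
    · -- deep layer
      have e : P.N.dims (P.off + j + 1) + P.c = P.SD (j + 1) := by simp [Seg.SD, h]
      have hsc : P.scomb j = FNNcast rfl e
          (deepComb (P.N.comb (P.off + j)) h P.c (P.SD j + P.SD j)
            (Fin.addCases (motive := fun _ => Fin (P.SD j + P.SD j))
              (fun r => Fin.castAdd _ (P.sigma j r))
              (fun r => Fin.natAdd _ (P.sigma j r)))
            (fun p => Fin.castAdd _ (P.chi j p))) := by
        simp only [Seg.scomb]; rw [dif_neg h]
      have hbd : ∀ p, (Fin.append A B) (Fin.castAdd (P.SD j) (P.chi j p)) ∈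
          Set.Icc (0:ℝ) 1 := by
        intro p
        rw [Fin.append_left]
        show runSeq P.SD P.scomb adj E₀ j v (P.chi j p) ∈ Set.Icc (0:ℝ) 1
        rw [(IH v).2 p]
        exact hb ⟨j, by omega, h⟩ v p
      have hx : ∀ i, runSeq P.SD P.scomb adj E₀ (j + 1) v (Fin.cast e i) =
          Fin.append ((P.N.comb (P.off + j)).eval fun qq => Fin.append A B
              (Fin.addCases (motive := fun _ => Fin (P.SD j + P.SD j))
                (fun r => Fin.castAdd _ (P.sigma j r))
                (fun r => Fin.natAdd _ (P.sigma j r)) qq))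
            (fun p => Fin.append A B (Fin.castAdd (P.SD j) (P.chi j p))) i := by
        intro i
        rw [hrun, hsc, FNNcast_eval, vec_cast_self, deepComb_eval _ _ _ _ _ _ _ hbd]
        rfl
      have harg : (fun qq => Fin.append A B
            (Fin.addCases (motive := fun _ => Fin (P.SD j + P.SD j))
              (fun r => Fin.castAdd _ (P.sigma j r))
              (fun r => Fin.natAdd _ (P.sigma j r)) qq)) =
          Fin.append (P.N.toMPNN.emb adj labN (P.off + j) v)
            (sumAgg (P.N.dims (P.off + j))
              ((Finset.univ.filter fun u => adj v u = true).val.map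
                (P.N.toMPNN.emb adj labN (P.off + j)))) := by
        funext qq
        by_cases hlt : (qq : ℕ) < P.N.dims (P.off + j)
        · erw [addCases_apply, dif_pos hlt, Fin.append_left, append_apply,
            dif_pos (show (qq : ℕ) < P.N.toMPNN.dims (P.off + j) from hlt)]
          exact (IH v).1 _
        · erw [addCases_apply, dif_neg hlt, Fin.append_right, append_apply,
            dif_neg (show ¬ (qq : ℕ) < P.N.toMPNN.dims (P.off + j) from hlt)]
          exact hBσ _
      constructor
      · intro q
        have hq : P.sigma (j + 1) q = Fin.cast e (Fin.castAdd P.c q) := by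
          simp only [Seg.sigma]; rw [dif_neg h]
        rw [hq, hx, harg, Fin.append_left]
        rfl
      · intro p
        have hp : P.chi (j + 1) p = Fin.cast e (Fin.natAdd (P.N.dims (P.off + j + 1)) p) := by
          simp only [Seg.chi]; rw [dif_neg h]
        rw [hp, hx, Fin.append_right, Fin.append_left]
        exact (IH v).2 p

end GenSimSec

section GlobalAux

lemma emb_apply_idx (M : MPNN) {V : Type} [Fintype V] [DecidableEq V]
    (adj : V → V → Bool) (c : V → Vec (M.dims 0)) {i i' : ℕ} (h : i = i') (v : V)
    (q : Fin (M.dims i')) :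
    M.emb adj c i v (Fin.cast (congrArg M.dims h).symm q) = M.emb adj c i' v q := by
  subst h; rfl

lemma emb_eq_idx (M : MPNN) {V : Type} [Fintype V] [DecidableEq V]
    (adj : V → V → Bool) (c : V → Vec (M.dims 0)) {i i' : ℕ} (h : i = i') (v : V) :
    M.emb adj c i v = Vec.cast (congrArg M.dims h).symm (M.emb adj c i' v) := by
  subst h; rfl

lemma hatEmb_bounded (N : MPNNhat) {V : Type} [Fintype V] [DecidableEq V]
    (adj : V → V → Bool) (lab : V → Vec (N.dims 0))
    (hlab : ∀ v q, lab v q ∈ Set.Icc (0:ℝ) 1) :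
    ∀ i, (i = 0 ∨ (N.comb (i - 1)).depth ≠ 0) →
      ∀ v q, N.toMPNN.emb adj lab i v q ∈ Set.Icc (0:ℝ) 1 := by
  intro i hi v q
  cases i with
  | zero => exact hlab v q
  | succ i =>
      rw [hatEmb_succ]
      exact FNN_eval_mem _ (hi.resolve_left (by omega)) _ _

lemma cast_append_ext {m n n' M : ℕ} (h : m + n = M) (h' : m + n' = M)
    (u : Vec m) (w : Vec n) (w' : Vec n')
    (hw : ∀ (p : Fin n) (p' : Fin n'), (p : ℕ) = (p' : ℕ) → w p = w' p') :
    Vec.cast h (Fin.append u w) = Vec.cast h' (Fin.append u w') := by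
  funext j
  rw [vec_cast_apply, vec_cast_apply, append_apply, append_apply]
  by_cases hj : ((Fin.cast h.symm j) : ℕ) < m
  · rw [dif_pos hj, dif_pos (show ((Fin.cast h'.symm j) : ℕ) < m from hj)]
    rfl
  · rw [dif_neg hj, dif_neg (show ¬ ((Fin.cast h'.symm j) : ℕ) < m from hj)]
    exact hw _ _ rfl

lemma vec_cast_append_zero {m M : ℕ} (h : m + 0 = M) (h' : m = M) (u : Vec m) (w : Vec 0) :
    Vec.cast h (Fin.append u w) = Vec.cast h' u := by
  subst h'
  funext j
  rw [vec_cast_apply, vec_cast_apply, append_apply,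
    dif_pos (show ((Fin.cast h.symm j) : ℕ) < m from j.isLt)]

end GlobalAux

section Global

variable (N₁ N₂ : MPNNhat)

/-- The cut point: end of the last deep layer of a line. -/
def ecut : ℕ → ℕ
  | 0 => 0
  | n + 1 => if (N₂.comb n).depth = 0 then ecut n else n + 1

lemma ecut_le : ∀ n, ecut N₂ n ≤ n := by
  intro n
  induction n with
  | zero => exact le_rfl
  | succ n ih =>
      rw [ecut]
      split
      · omega
      · omega

lemma ecut_zero_after : ∀ n j, ecut N₂ n ≤ j → j < n → (N₂.comb j).depth = 0 := by
  intro n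
  induction n with
  | zero => omega
  | succ n ih =>
      intro j h1 h2
      rw [ecut] at h1
      by_cases h : (N₂.comb n).depth = 0
      · rw [if_pos h] at h1
        rcases Nat.lt_succ_iff_lt_or_eq.mp h2 with h3 | h3
        · exact ih j h1 h3
        · subst h3; exact h
      · rw [if_neg h] at h1
        omega
  
lemma ecut_deep_before : ∀ n, ecut N₂ n ≠ 0 → (N₂.comb (ecut N₂ n - 1)).depth ≠ 0 := by
  intro n
  induction n with
  | zero => intro h; simp [ecut] at h
  | succ n ih =>
      intro h
      by_cases hz : (N₂.comb n).depth = 0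
      · rw [ecut, if_pos hz] at h ⊢
        exact ih h
      · rw [ecut, if_neg hz]
        simpa using hz

variable (C : AffineLayer (N₁.dims N₁.depth + N₂.dims N₂.depth) (N₂.dims 0))

/-- Phase A: simulate line 2 up to its cut point, carrying the colour input. -/
def segA : Seg :=
  ⟨N₂, 0, N₁.dims 0, N₁.dims 0 + N₂.dims 0, Fin.natAdd (N₁.dims 0), Fin.castAdd (N₂.dims 0)⟩

/-- Phase B: simulate all of line 1, carrying line 2's embedding at the cut point. -/
def segB : Seg :=
  ⟨N₁, 0, N₂.dims (ecut N₂ N₂.depth), (segA N₁ N₂).SD (ecut N₂ N₂.depth),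
    (segA N₁ N₂).chi (ecut N₂ N₂.depth),
    fun p => (segA N₁ N₂).sigma (ecut N₂ N₂.depth)
      (Fin.cast (congrArg N₂.dims (Nat.zero_add _).symm) p)⟩

/-- Phase C: finish line 2's trailing zero layers, carrying line 1's final embedding. -/
def segC : Seg :=
  ⟨N₂, ecut N₂ N₂.depth, N₁.dims N₁.depth, (segB N₁ N₂).SD N₁.depth,
    (segB N₁ N₂).chi N₁.depth,
    fun p => (segB N₁ N₂).sigma N₁.depth
      (Fin.cast (congrArg N₁.dims (Nat.zero_add _).symm) p)⟩

/-- Dimensions of the combined recursive MPNN. -/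
def GD (i : ℕ) : ℕ :=
  if i ≤ ecut N₂ N₂.depth then (segA N₁ N₂).SD i
  else if i ≤ ecut N₂ N₂.depth + N₁.depth then (segB N₁ N₂).SD (i - ecut N₂ N₂.depth)
  else if i ≤ ecut N₂ N₂.depth + N₁.depth + (N₂.depth - ecut N₂ N₂.depth) then
    (segC N₁ N₂).SD (i - (ecut N₂ N₂.depth + N₁.depth))
  else N₂.dims 0

lemma GD_A (i : ℕ) (h : i ≤ ecut N₂ N₂.depth) : GD N₁ N₂ i = (segA N₁ N₂).SD i := by
  unfold GD; rw [if_pos h]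

lemma GD_B (i : ℕ) (h1 : ecut N₂ N₂.depth ≤ i) (h2 : i ≤ ecut N₂ N₂.depth + N₁.depth) :
    GD N₁ N₂ i = (segB N₁ N₂).SD (i - ecut N₂ N₂.depth) := by
  unfold GD
  by_cases h : i ≤ ecut N₂ N₂.depth
  · have hi : i = ecut N₂ N₂.depth := le_antisymm h h1
    subst hi
    rw [if_pos le_rfl, Nat.sub_self]
    rfl
  · rw [if_neg h, if_pos h2]

lemma GD_C (i : ℕ) (h1 : ecut N₂ N₂.depth + N₁.depth ≤ i)
    (h2 : i ≤ ecut N₂ N₂.depth + N₁.depth + (N₂.depth - ecut N₂ N₂.depth)) :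
    GD N₁ N₂ i = (segC N₁ N₂).SD (i - (ecut N₂ N₂.depth + N₁.depth)) := by
  have hB0 : (segB N₁ N₂).SD N₁.depth = (segC N₁ N₂).SD 0 := rfl
  by_cases h : i ≤ ecut N₂ N₂.depth + N₁.depth
  · have hi : i = ecut N₂ N₂.depth + N₁.depth := le_antisymm h h1
    subst hi
    rw [GD_B _ _ _ (by omega) le_rfl, Nat.add_sub_cancel_left, Nat.sub_self, hB0]
  · unfold GD
    rw [if_neg (by omega), if_neg h, if_pos h2]

lemma GD_zero : GD N₁ N₂ 0 = N₁.dims 0 + N₂.dims 0 := by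
  rw [GD_A _ _ 0 (Nat.zero_le _)]; rfl

lemma GD_gt (i : ℕ) (h : ecut N₂ N₂.depth + N₁.depth + (N₂.depth - ecut N₂ N₂.depth) < i) :
    GD N₁ N₂ i = N₂.dims 0 := by
  unfold GD
  rw [if_neg (by omega), if_neg (by omega), if_neg (by omega)]

lemma GD_last :
    GD N₁ N₂ (ecut N₂ N₂.depth + N₁.depth + (N₂.depth - ecut N₂ N₂.depth) + 1) = N₂.dims 0 :=
  GD_gt _ _ _ (by omega)

/-- The final layer: apply the cell to the two lines' final embeddings. -/
noncomputable def finalF : FNN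
    ((segC N₁ N₂).SD (N₂.depth - ecut N₂ N₂.depth) +
      (segC N₁ N₂).SD (N₂.depth - ecut N₂ N₂.depth)) (N₂.dims 0 + 0) :=
  deepComb (affineToFNN C) Nat.one_ne_zero 0 _
    (Fin.addCases (motive := fun _ => Fin ((segC N₁ N₂).SD (N₂.depth - ecut N₂ N₂.depth) +
        (segC N₁ N₂).SD (N₂.depth - ecut N₂ N₂.depth)))
      (fun p => Fin.castAdd _ ((segC N₁ N₂).chi (N₂.depth - ecut N₂ N₂.depth) p))
      (fun r => Fin.castAdd _ ((segC N₁ N₂).sigma (N₂.depth - ecut N₂ N₂.depth)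
        (Fin.cast (congrArg N₂.dims (Nat.add_sub_cancel' (ecut_le N₂ N₂.depth)).symm) r))))
    Fin.elim0

/-- Layers of the combined recursive MPNN. -/
noncomputable def GC (i : ℕ) : FNN (GD N₁ N₂ i + GD N₁ N₂ i) (GD N₁ N₂ (i + 1)) :=
  if h1 : i < ecut N₂ N₂.depth then
    FNNcast (by rw [GD_A N₁ N₂ i h1.le]) (by rw [GD_A N₁ N₂ (i+1) h1]) ((segA N₁ N₂).scomb i)
  else if h2 : i < ecut N₂ N₂.depth + N₁.depth then
    FNNcast (by rw [GD_B N₁ N₂ i (by omega) (by omega)])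
      (by rw [GD_B N₁ N₂ (i+1) (by omega) (by omega)]; congr 1; omega)
      ((segB N₁ N₂).scomb (i - ecut N₂ N₂.depth))
  else if h3 : i < ecut N₂ N₂.depth + N₁.depth + (N₂.depth - ecut N₂ N₂.depth) then
    FNNcast (by rw [GD_C N₁ N₂ i (by omega) (by omega)])
      (by rw [GD_C N₁ N₂ (i+1) (by omega) (by omega)]; congr 1; omega)
      ((segC N₁ N₂).scomb (i - (ecut N₂ N₂.depth + N₁.depth)))
  else if h4 : i = ecut N₂ N₂.depth + N₁.depth + (N₂.depth - ecut N₂ N₂.depth) then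
    FNNcast (by
        rw [h4, GD_C N₁ N₂ _ (by omega) (by omega)]
        rw [show ecut N₂ N₂.depth + N₁.depth + (N₂.depth - ecut N₂ N₂.depth) -
          (ecut N₂ N₂.depth + N₁.depth) = N₂.depth - ecut N₂ N₂.depth by omega])
      (by rw [GD_gt N₁ N₂ (i+1) (by omega)]; omega)
      (finalF N₁ N₂ C)
  else junkF _ _

/-- The combined recursive MPNN. -/
noncomputable def M₃ : MPNNhat :=
  ⟨ecut N₂ N₂.depth + N₁.depth + (N₂.depth - ecut N₂ N₂.depth) + 1, GD N₁ N₂, GC N₁ N₂ C⟩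

variable (O : AffineLayer (N₂.dims 0) 1)

/-- The recursive TGNN simulating the given time-and-graph TGNN. -/
noncomputable def Trec : RecTGNN (N₁.dims 0) where
  M := M₃ N₁ N₂ C
  dim_in := by
    show GD N₁ N₂ 0 = N₁.dims 0 +
      GD N₁ N₂ (ecut N₂ N₂.depth + N₁.depth + (N₂.depth - ecut N₂ N₂.depth) + 1)
    rw [GD_zero, GD_last]
  out := ALprecomp O (Fin.cast (GD_last N₁ N₂).symm)

end Global

section Snapshot

variable (N₁ N₂ : MPNNhat)
variable (C : AffineLayer (N₁.dims N₁.depth + N₂.dims N₂.depth) (N₂.dims 0))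

lemma snapshot {V : Type} [Fintype V] [DecidableEq V] (adj : V → V → Bool)
    (lab₁ : V → Vec (N₁.dims 0)) (lab₂ : V → Vec (N₂.dims 0))
    (h₁ : ∀ v q, lab₁ v q ∈ Set.Icc (0:ℝ) 1) (h₂ : ∀ v q, lab₂ v q ∈ Set.Icc (0:ℝ) 1)
    (lab : V → Vec (GD N₁ N₂ 0))
    (hlab : ∀ v, lab v = Vec.cast (GD_zero N₁ N₂).symm (Fin.append (lab₁ v) (lab₂ v))) :
    ∀ v, (M₃ N₁ N₂ C).toMPNN.emb adj lab
        (ecut N₂ N₂.depth + N₁.depth + (N₂.depth - ecut N₂ N₂.depth) + 1) v =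
      Vec.cast (GD_last N₁ N₂).symm (C.eval (Fin.append
        (N₁.toMPNN.emb adj lab₁ N₁.depth v) (N₂.toMPNN.emb adj lab₂ N₂.depth v))) := by
  intro v
  -- Phase A
  have hdA : ∀ j, j ≤ ecut N₂ N₂.depth →
      (M₃ N₁ N₂ C).dims (0 + j) = (segA N₁ N₂).SD j := by
    intro j hj
    show GD N₁ N₂ (0 + j) = _
    rw [Nat.zero_add]
    exact GD_A N₁ N₂ j hj
  have hcA : ∀ j, j < ecut N₂ N₂.depth →
      HEq ((M₃ N₁ N₂ C).comb (0 + j)) ((segA N₁ N₂).scomb j) := by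
    intro j hj
    show HEq (GC N₁ N₂ C (0 + j)) _
    rw [Nat.zero_add]
    unfold GC
    rw [dif_pos hj]
    exact FNNcast_heq _ _ _
  have glueA := glue (M₃ N₁ N₂ C) adj lab (segA N₁ N₂).SD (segA N₁ N₂).scomb 0
    (ecut N₂ N₂.depth) hdA hcA (fun u => Fin.append (lab₁ u) (lab₂ u)) (fun u => hlab u)
  have genA := Seg.genSim (segA N₁ N₂) adj lab₂ lab₁
    (fun u => Fin.append (lab₁ u) (lab₂ u))
    (fun v q => Fin.append_right _ _ q) (fun v p => Fin.append_left _ _ p)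
    (ecut N₂ N₂.depth) (fun _ => h₁)
  set RA := runSeq (segA N₁ N₂).SD (segA N₁ N₂).scomb adj
    (fun u => Fin.append (lab₁ u) (lab₂ u)) with hRA
  have hglueA : ∀ j (hj : j ≤ ecut N₂ N₂.depth) (u : V),
      (M₃ N₁ N₂ C).toMPNN.emb adj lab j u = Vec.cast (GD_A N₁ N₂ j hj).symm (RA j u) := by
    intro j hj u
    have h5 := glueA j hj u
    have h6 := emb_eq_idx ((M₃ N₁ N₂ C).toMPNN) adj lab (Nat.zero_add j).symm u
    erw [h6, h5, vec_cast_cast]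
  -- Phase B
  have hdB : ∀ j, j ≤ N₁.depth →
      (M₃ N₁ N₂ C).dims (ecut N₂ N₂.depth + j) = (segB N₁ N₂).SD j := by
    intro j hj
    show GD N₁ N₂ _ = _
    rw [GD_B N₁ N₂ _ (by omega) (by omega), Nat.add_sub_cancel_left]
  have hcB : ∀ j, j < N₁.depth →
      HEq ((M₃ N₁ N₂ C).comb (ecut N₂ N₂.depth + j)) ((segB N₁ N₂).scomb j) := by
    intro j hj
    show HEq (GC N₁ N₂ C _) _
    unfold GC
    rw [dif_neg (by omega), dif_pos (by omega)]
    refine HEq.trans (FNNcast_heq _ _ _) ?_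
    rw [Nat.add_sub_cancel_left]
  have h0B : ∀ u, (M₃ N₁ N₂ C).toMPNN.emb adj lab (ecut N₂ N₂.depth + 0) u =
      Vec.cast (hdB 0 (Nat.zero_le _)).symm (RA (ecut N₂ N₂.depth) u) :=
    fun u => hglueA (ecut N₂ N₂.depth) le_rfl u
  have glueB := glue (M₃ N₁ N₂ C) adj lab (segB N₁ N₂).SD (segB N₁ N₂).scomb
    (ecut N₂ N₂.depth) N₁.depth hdB hcB (RA (ecut N₂ N₂.depth)) h0B
  have hctxB : ∀ u p, N₂.toMPNN.emb adj lab₂ (ecut N₂ N₂.depth) u p ∈ Set.Icc (0:ℝ) 1 := by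
    intro u p
    refine hatEmb_bounded N₂ adj lab₂ h₂ (ecut N₂ N₂.depth) ?_ u p
    by_cases h : ecut N₂ N₂.depth = 0
    · exact Or.inl h
    · exact Or.inr (ecut_deep_before N₂ N₂.depth h)
  have genB := Seg.genSim (segB N₁ N₂) adj lab₁
    (fun u => N₂.toMPNN.emb adj lab₂ (ecut N₂ N₂.depth) u) (RA (ecut N₂ N₂.depth))
    (fun u q => (genA (ecut N₂ N₂.depth) le_rfl u).2 q)
    (fun u p => ((genA (ecut N₂ N₂.depth) le_rfl u).1 _).trans
      (emb_apply_idx N₂.toMPNN adj lab₂ (Nat.zero_add _) u p))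
    N₁.depth (fun _ => hctxB)
  set RB := runSeq (segB N₁ N₂).SD (segB N₁ N₂).scomb adj (RA (ecut N₂ N₂.depth)) with hRB
  -- Phase C
  have hdC : ∀ j, j ≤ N₂.depth - ecut N₂ N₂.depth →
      (M₃ N₁ N₂ C).dims (ecut N₂ N₂.depth + N₁.depth + j) = (segC N₁ N₂).SD j := by
    intro j hj
    show GD N₁ N₂ _ = _
    rw [GD_C N₁ N₂ _ (by omega) (by omega), Nat.add_sub_cancel_left]
  have hcC : ∀ j, j < N₂.depth - ecut N₂ N₂.depth →
      HEq ((M₃ N₁ N₂ C).comb (ecut N₂ N₂.depth + N₁.depth + j)) ((segC N₁ N₂).scomb j) := by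
    intro j hj
    show HEq (GC N₁ N₂ C _) _
    unfold GC
    rw [dif_neg (by omega), dif_neg (by omega), dif_pos (by omega)]
    refine HEq.trans (FNNcast_heq _ _ _) ?_
    rw [Nat.add_sub_cancel_left]
  have h0C : ∀ u, (M₃ N₁ N₂ C).toMPNN.emb adj lab (ecut N₂ N₂.depth + N₁.depth + 0) u =
      Vec.cast (hdC 0 (Nat.zero_le _)).symm (RB N₁.depth u) :=
    fun u => glueB N₁.depth le_rfl u
  have glueC := glue (M₃ N₁ N₂ C) adj lab (segC N₁ N₂).SD (segC N₁ N₂).scomb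
    (ecut N₂ N₂.depth + N₁.depth) (N₂.depth - ecut N₂ N₂.depth) hdC hcC (RB N₁.depth) h0C
  have hbC : (∃ j, j < N₂.depth - ecut N₂ N₂.depth ∧
      (N₂.comb (ecut N₂ N₂.depth + j)).depth ≠ 0) →
      ∀ u p, N₁.toMPNN.emb adj lab₁ N₁.depth u p ∈ Set.Icc (0:ℝ) 1 := by
    rintro ⟨j, hj, hdeep⟩
    have hle := ecut_le N₂ N₂.depth
    exact absurd (ecut_zero_after N₂ N₂.depth _ (by omega) (by omega)) hdeep
  have genC := Seg.genSim (segC N₁ N₂) adj lab₂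
    (fun u => N₁.toMPNN.emb adj lab₁ N₁.depth u) (RB N₁.depth)
    (fun u q => (genB N₁.depth le_rfl u).2 q)
    (fun u p => ((genB N₁.depth le_rfl u).1 _).trans
      (emb_apply_idx N₁.toMPNN adj lab₁ (Nat.zero_add _) u p))
    (N₂.depth - ecut N₂ N₂.depth) hbC
  set RC := runSeq (segC N₁ N₂).SD (segC N₁ N₂).scomb adj (RB N₁.depth) with hRC
  -- Final layer
  have hcF : HEq ((M₃ N₁ N₂ C).comb
      (ecut N₂ N₂.depth + N₁.depth + (N₂.depth - ecut N₂ N₂.depth))) (finalF N₁ N₂ C) := by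
    show HEq (GC N₁ N₂ C _) _
    unfold GC
    rw [dif_neg (by omega), dif_neg (by omega), dif_neg (by omega), dif_pos rfl]
    exact FNNcast_heq _ _ _
  have hEp3 : (M₃ N₁ N₂ C).toMPNN.emb adj lab
      (ecut N₂ N₂.depth + N₁.depth + (N₂.depth - ecut N₂ N₂.depth)) =
      fun u => Vec.cast (hdC (N₂.depth - ecut N₂ N₂.depth) le_rfl).symm
        (RC (N₂.depth - ecut N₂ N₂.depth) u) :=
    funext (glueC (N₂.depth - ecut N₂ N₂.depth) le_rfl)
  erw [hatEmb_succ]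
  erw [FNN_heq_eval
    (show (segC N₁ N₂).SD (N₂.depth - ecut N₂ N₂.depth) +
        (segC N₁ N₂).SD (N₂.depth - ecut N₂ N₂.depth) =
        GD N₁ N₂ (ecut N₂ N₂.depth + N₁.depth + (N₂.depth - ecut N₂ N₂.depth)) +
        GD N₁ N₂ (ecut N₂ N₂.depth + N₁.depth + (N₂.depth - ecut N₂ N₂.depth)) by
      rw [GD_C N₁ N₂ _ (by omega) (by omega), Nat.add_sub_cancel_left])
    (show N₂.dims 0 + 0 =
        GD N₁ N₂ (ecut N₂ N₂.depth + N₁.depth + (N₂.depth - ecut N₂ N₂.depth) + 1) by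
      rw [GD_gt N₁ N₂ _ (by omega)]; omega)
    hcF.symm]
  erw [hEp3, sumAgg_cast,
    ← vec_cast_append (hdC (N₂.depth - ecut N₂ N₂.depth) le_rfl).symm
      (hdC (N₂.depth - ecut N₂ N₂.depth) le_rfl).symm
      (by rw [hdC (N₂.depth - ecut N₂ N₂.depth) le_rfl]),
    vec_cast_cast (x := Fin.append _ _)]
  rw [vec_cast_self]
  erw [show finalF N₁ N₂ C = deepComb (affineToFNN C) Nat.one_ne_zero 0 _
      (Fin.addCases (motive := fun _ => Fin ((segC N₁ N₂).SD (N₂.depth - ecut N₂ N₂.depth) +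
          (segC N₁ N₂).SD (N₂.depth - ecut N₂ N₂.depth)))
        (fun p => Fin.castAdd _ ((segC N₁ N₂).chi (N₂.depth - ecut N₂ N₂.depth) p))
        (fun r => Fin.castAdd _ ((segC N₁ N₂).sigma (N₂.depth - ecut N₂ N₂.depth)
          (Fin.cast (congrArg N₂.dims (Nat.add_sub_cancel' (ecut_le N₂ N₂.depth)).symm) r))))
      Fin.elim0 from rfl,
    deepComb_eval _ _ _ _ _ _ _ (fun p => p.elim0), affineToFNN_eval]
  have hargF : (fun (i : Fin (N₁.dims N₁.depth + N₂.dims N₂.depth)) =>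
        Fin.append (RC (N₂.depth - ecut N₂ N₂.depth) v)
        (sumAgg ((segC N₁ N₂).SD (N₂.depth - ecut N₂ N₂.depth))
          ((Finset.univ.filter fun u => adj v u = true).val.map
            (RC (N₂.depth - ecut N₂ N₂.depth))))
        (Fin.addCases (motive := fun _ => Fin ((segC N₁ N₂).SD (N₂.depth - ecut N₂ N₂.depth) +
            (segC N₁ N₂).SD (N₂.depth - ecut N₂ N₂.depth)))
          (fun (p : Fin (N₁.dims N₁.depth)) =>
            Fin.castAdd _ ((segC N₁ N₂).chi (N₂.depth - ecut N₂ N₂.depth) p))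
          (fun (r : Fin (N₂.dims N₂.depth)) =>
            Fin.castAdd _ ((segC N₁ N₂).sigma (N₂.depth - ecut N₂ N₂.depth)
              (Fin.cast (congrArg N₂.dims (Nat.add_sub_cancel' (ecut_le N₂ N₂.depth)).symm) r)))
          i)) =
      Fin.append (N₁.toMPNN.emb adj lab₁ N₁.depth v) (N₂.toMPNN.emb adj lab₂ N₂.depth v) := by
    funext i
    by_cases hlt : (i : ℕ) < N₁.dims N₁.depth
    · erw [addCases_apply, dif_pos hlt, Fin.append_left, append_apply,
        dif_pos (show (i : ℕ) < N₁.toMPNN.dims N₁.depth from hlt)]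
      exact (genC (N₂.depth - ecut N₂ N₂.depth) le_rfl v).2 _
    · erw [addCases_apply, dif_neg hlt, Fin.append_left, append_apply,
        dif_neg (show ¬ (i : ℕ) < N₁.toMPNN.dims N₁.depth from hlt)]
      exact ((genC (N₂.depth - ecut N₂ N₂.depth) le_rfl v).1 _).trans
        (emb_apply_idx N₂.toMPNN adj lab₂ (Nat.add_sub_cancel' (ecut_le N₂ N₂.depth)) v _)
  rw [hargF]
  exact vec_cast_append_zero _ (GD_last N₁ N₂).symm _ _

end Snapshot

section StateSim

variable (N₁ N₂ : MPNNhat)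
variable (C : AffineLayer (N₁.dims N₁.depth + N₂.dims N₂.depth) (N₂.dims 0))

/-- The reference state sequence (the time-and-graph state, expressed via `C`). -/
noncomputable def Sref {V : Type} [Fintype V] [DecidableEq V]
    (TG : TemporalGraph V (N₁.dims 0)) : ℕ → V → Vec (N₂.dims 0)
  | 0 => fun v => C.eval (Fin.append
      (N₁.toMPNN.emb (TG.adj 0) (TG.colVec 0) N₁.depth v)
      (N₂.toMPNN.emb (TG.adj 0) (fun _ _ => 0) N₂.depth v))
  | i + 1 => fun v => C.eval (Fin.append
      (N₁.toMPNN.emb (TG.adj (i + 1)) (TG.colVec (i + 1)) N₁.depth v)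
      (N₂.toMPNN.emb (TG.adj (i + 1)) (Sref TG i) N₂.depth v))

lemma Sref_mem {V : Type} [Fintype V] [DecidableEq V] (TG : TemporalGraph V (N₁.dims 0))
    (i : ℕ) (v : V) (q : Fin (N₂.dims 0)) :
    Sref N₁ N₂ C TG i v q ∈ Set.Icc (0:ℝ) 1 := by
  cases i <;> exact AL_eval_mem _ _ _

lemma colVec_mem {V : Type} {k : ℕ} (TG : TemporalGraph V k) (i : ℕ) (v : V) (j : Fin k) :
    TG.colVec i v j ∈ Set.Icc (0:ℝ) 1 := by
  simp only [TemporalGraph.colVec]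
  split <;> norm_num

variable (O : AffineLayer (N₂.dims 0) 1)

lemma stateSim {V : Type} [Fintype V] [DecidableEq V] (TG : TemporalGraph V (N₁.dims 0)) :
    ∀ i v, (Trec N₁ N₂ C O).state TG i v =
      Vec.cast (GD_last N₁ N₂).symm (Sref N₁ N₂ C TG i v) := by
  intro i
  induction i with
  | zero =>
      intro v
      exact snapshot N₁ N₂ C (TG.adj 0) (TG.colVec 0) (fun _ _ => 0)
        (fun u q => colVec_mem TG 0 u q) (fun u q => by norm_num)
        (fun u => Vec.cast (Trec N₁ N₂ C O).dim_in.symm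
          (Fin.append (TG.colVec 0 u) (fun _ => 0)))
        (fun u => cast_append_ext (Trec N₁ N₂ C O).dim_in.symm (GD_zero N₁ N₂).symm
          (TG.colVec 0 u) _ _ (fun _ _ _ => rfl)) v
  | succ i ih =>
      intro v
      exact snapshot N₁ N₂ C (TG.adj (i + 1)) (TG.colVec (i + 1)) (Sref N₁ N₂ C TG i)
        (fun u q => colVec_mem TG _ u q) (fun u q => Sref_mem N₁ N₂ C TG i u q)
        (fun u => Vec.cast (Trec N₁ N₂ C O).dim_in.symm
          (Fin.append (TG.colVec (i + 1) u) ((Trec N₁ N₂ C O).state TG i u)))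
        (fun u => by
          rw [ih u]
          exact cast_append_ext (Trec N₁ N₂ C O).dim_in.symm (GD_zero N₁ N₂).symm
            (TG.colVec (i + 1) u) _ _ (fun p p' hpp => by
              erw [vec_cast_apply]
              congr 1
              exact Fin.ext hpp)) v

end StateSim

/-- Theorem 7, `T_TandG[M̂,F] ≤ T_rec[M̂]`: every time-and-graph TGNN of
the class `T_TandG[M̂,F]` is equivalent to some recursive TGNN over `M̂`. -/
theorem TandG_le_Trec :
    ∀ (k : ℕ) (T : TandGTGNN k), T.inHatF →
      ∃ T' : RecTGNN k,
        ∀ (V : Type) [Fintype V] [DecidableEq V], ∀ (TG : TemporalGraph V k) (v : V),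
          (T.output TG v = 1 ↔ T'.output TG v = 1) := by
  intro k T hT
  obtain ⟨M₁, M₂, sd, hdim, dim1, dim2, cell, out⟩ := T
  obtain ⟨⟨N₁, hN₁⟩, ⟨N₂, hN₂⟩, ⟨C, hC⟩, ⟨O, hO⟩⟩ := hT
  dsimp only at hN₁ hN₂ hC hO dim1 dim2
  subst hN₁
  subst hN₂
  subst dim1
  subst dim2
  refine ⟨Trec N₁ N₂ C O, fun V _ _ TG v => ?_⟩
  have hstate : ∀ (i : ℕ) (u : V), TandGTGNN.state
      (⟨N₁.toMPNN, N₂.toMPNN, sd, N₂.toMPNN.dims 0, rfl, rfl, cell, out⟩ :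
        TandGTGNN (N₁.toMPNN.dims 0)) TG i u = Sref N₁ N₂ C TG i u := by
    intro i
    induction i with
    | zero =>
        intro u
        show cell _ _ = _
        rw [hC]
        rfl
    | succ i ih =>
        intro u
        show cell _ _ = _
        rw [hC]
        have hl : (fun w => Vec.cast (rfl :
            N₂.toMPNN.dims 0 = N₂.toMPNN.dims 0).symm (TandGTGNN.state
              (⟨N₁.toMPNN, N₂.toMPNN, sd, N₂.toMPNN.dims 0, rfl, rfl, cell, out⟩ :
                TandGTGNN (N₁.toMPNN.dims 0)) TG i w)) = Sref N₁ N₂ C TG i :=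
          funext fun w => (vec_cast_self _ _).trans (ih w)
        rw [hl]
        rfl
  have hout1 : TandGTGNN.output
      (⟨N₁.toMPNN, N₂.toMPNN, sd, N₂.toMPNN.dims 0, rfl, rfl, cell, out⟩ :
        TandGTGNN (N₁.toMPNN.dims 0)) TG v =
      O.eval (Sref N₁ N₂ C TG (TG.len - 1) v) 0 := by
    show out (TandGTGNN.state
      (⟨N₁.toMPNN, N₂.toMPNN, sd, N₂.toMPNN.dims 0, rfl, rfl, cell, out⟩ :
        TandGTGNN (N₁.toMPNN.dims 0)) TG (TG.len - 1) v) = _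
    erw [hstate, hO]
  have hout2 : RecTGNN.output (Trec N₁ N₂ C O) TG v =
      O.eval (Sref N₁ N₂ C TG (TG.len - 1) v) 0 := by
    show ((Trec N₁ N₂ C O).out).eval ((Trec N₁ N₂ C O).state TG (TG.len - 1) v) 0 = _
    rw [stateSim N₁ N₂ C O TG (TG.len - 1) v]
    show (ALprecomp O (Fin.cast (GD_last N₁ N₂).symm)).eval _ 0 = _
    rw [ALprecomp_eval]
    rfl
  erw [hout1, hout2]
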